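/- Let μ be a probability measure on ℝ with mean 0 and variance 1, and suppose μ((-1-ε,-1+ε) ∪ (1-ε,1+ε)) ≥ 1-ε for ε ∈ (0,1). Write p₁ = μ((-∞,-1-ε]), p₂ = μ((-1-ε,-1+ε)), p₃ = μ([-1+ε,1-ε]), p₄ = μ((1-ε,1+ε)), p₅ = μ([1+ε,∞)). Then |p₂ - p₄| < 5ε and 1/2 - 3ε < p₂, p₄ < 1/2 + (5/2)ε. -/

import Mathlib

open MeasureTheory Set

set_option maxHeartbeats 1000000 in
theorem region_masses_estimate (μ : Measure ℝ) [IsProbabilityMeasure μ]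
    (hi1 : Integrable (fun x => x) μ) (hi2 : Integrable (fun x => x ^ 2) μ)
    (h1 : ∫ x, x ∂μ = 0) (h2 : ∫ x, x ^ 2 ∂μ = 1)
    (ε : ℝ) (hε : ε ∈ Ioo (0 : ℝ) 1)
    (hconc : (μ (Ioo (-1 - ε) (-1 + ε) ∪ Ioo (1 - ε) (1 + ε))).toReal ≥ 1 - ε) :
    |(μ (Ioo (-1 - ε) (-1 + ε))).toReal - (μ (Ioo (1 - ε) (1 + ε))).toReal| < 5 * ε ∧
    1 / 2 - 3 * ε < (μ (Ioo (-1 - ε) (-1 + ε))).toReal ∧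
    (μ (Ioo (-1 - ε) (-1 + ε))).toReal < 1 / 2 + (5 / 2) * ε ∧
    1 / 2 - 3 * ε < (μ (Ioo (1 - ε) (1 + ε))).toReal ∧
    (μ (Ioo (1 - ε) (1 + ε))).toReal < 1 / 2 + (5 / 2) * ε := by
  obtain ⟨hε0, hε1⟩ := hε
  set A : Set ℝ := Ioo (-1 - ε) (-1 + ε) with hAdef
  set B : Set ℝ := Ioo (1 - ε) (1 + ε) with hBdef
  have hA : MeasurableSet A := measurableSet_Ioo
  have hB : MeasurableSet B := measurableSet_Ioo
  have hdisj : Disjoint A B := by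
    rw [Set.disjoint_left]
    intro x hx hx'
    have h1x : x < -1 + ε := hx.2
    have h2x : 1 - ε < x := hx'.1
    linarith
  set R : Set ℝ := (A ∪ B)ᶜ with hRdef
  have hR : MeasurableSet R := (hA.union hB).compl
  set p2 : ℝ := (μ A).toReal with hp2
  set p4 : ℝ := (μ B).toReal with hp4
  have hfin : ∀ s : Set ℝ, μ s ≠ ⊤ := fun s => measure_ne_top μ s
  -- masses
  have hunion : (μ (A ∪ B)).toReal = p2 + p4 := by
    rw [measure_union hdisj hB, ENNReal.toReal_add (hfin A) (hfin B)]
  have hsum_le : p2 + p4 ≤ 1 := by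
    rw [← hunion]
    have := prob_le_one (μ := μ) (s := A ∪ B)
    exact ENNReal.toReal_le_of_le_ofReal one_pos.le (by simpa using this)
  have hsum_ge : 1 - ε ≤ p2 + p4 := by rw [← hunion]; exact hconc
  have hp2nn : 0 ≤ p2 := ENNReal.toReal_nonneg
  have hp4nn : 0 ≤ p4 := ENNReal.toReal_nonneg
  set r : ℝ := (μ R).toReal with hr
  have hrval : r = 1 - (p2 + p4) := by
    rw [hr, hRdef, prob_compl_eq_one_sub (hA.union hB),
      ENNReal.toReal_sub_of_le prob_le_one (by simp), hunion]
    simp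
  have hrnn : 0 ≤ r := ENNReal.toReal_nonneg
  -- integrals split
  have hiA1 : IntegrableOn (fun x => x) A μ := hi1.integrableOn
  have hiB1 : IntegrableOn (fun x => x) B μ := hi1.integrableOn
  have hiR1 : IntegrableOn (fun x => x) R μ := hi1.integrableOn
  have hiA2 : IntegrableOn (fun x : ℝ => x ^ 2) A μ := hi2.integrableOn
  have hiB2 : IntegrableOn (fun x : ℝ => x ^ 2) B μ := hi2.integrableOn
  have hiR2 : IntegrableOn (fun x : ℝ => x ^ 2) R μ := hi2.integrableOn
  set mA : ℝ := ∫ x in A, x ∂μ with hmA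
  set mB : ℝ := ∫ x in B, x ∂μ with hmB
  set mR : ℝ := ∫ x in R, x ∂μ with hmR
  set sA : ℝ := ∫ x in A, x ^ 2 ∂μ with hsA
  set sB : ℝ := ∫ x in B, x ^ 2 ∂μ with hsB
  set sR : ℝ := ∫ x in R, x ^ 2 ∂μ with hsR
  have hsplit1 : mA + mB + mR = 0 := by
    have h' : (∫ x in A ∪ B, x ∂μ) + (∫ x in (A ∪ B)ᶜ, x ∂μ) = ∫ x, x ∂μ :=
      integral_add_compl (hA.union hB) hi1
    rw [setIntegral_union hdisj hB hiA1 hiB1] at h'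
    rw [hmA, hmB, hmR, hRdef]
    linarith [h', h1.symm ▸ h']
  have hsplit2 : sA + sB + sR = 1 := by
    have h' : (∫ x in A ∪ B, x ^ 2 ∂μ) + (∫ x in (A ∪ B)ᶜ, x ^ 2 ∂μ) = ∫ x, x ^ 2 ∂μ :=
      integral_add_compl (hA.union hB) hi2
    rw [setIntegral_union hdisj hB hiA2 hiB2, h2] at h'
    rw [hsA, hsB, hsR, hRdef]
    linarith
  -- bounds on mA, mB
  have hmA_ub : mA ≤ (-1 + ε) * p2 := by
    have := setIntegral_mono_on hiA1 (integrableOn_const (measure_lt_top μ A).ne)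
      hA (fun x hx => hx.2.le)
    rw [setIntegral_const, smul_eq_mul, measureReal_def] at this
    rw [hmA]; linarith
  have hmA_lb : (-1 - ε) * p2 ≤ mA := by
    have := setIntegral_mono_on (integrableOn_const (measure_lt_top μ A).ne)
      hiA1 hA (fun x hx => hx.1.le)
    rw [setIntegral_const, smul_eq_mul, measureReal_def] at this
    rw [hmA]; linarith
  have hmB_ub : mB ≤ (1 + ε) * p4 := by
    have := setIntegral_mono_on hiB1 (integrableOn_const (measure_lt_top μ B).ne)
      hB (fun x hx => hx.2.le)
    rw [setIntegral_const, smul_eq_mul, measureReal_def] at this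
    rw [hmB]; linarith
  have hmB_lb : (1 - ε) * p4 ≤ mB := by
    have := setIntegral_mono_on (integrableOn_const (measure_lt_top μ B).ne)
      hiB1 hB (fun x hx => hx.1.le)
    rw [setIntegral_const, smul_eq_mul, measureReal_def] at this
    rw [hmB]; linarith
  -- lower bounds on sA, sB
  have hsA_lb : (1 - ε) ^ 2 * p2 ≤ sA := by
    have h' : ∫ _ in A, ((1 - ε) ^ 2 : ℝ) ∂μ ≤ ∫ x in A, x ^ 2 ∂μ :=
      setIntegral_mono_on (integrableOn_const (measure_lt_top μ A).ne)
        hiA2 hA (fun x hx => by nlinarith [hx.2])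
    rw [setIntegral_const, smul_eq_mul, measureReal_def] at h'
    rw [hsA]; linarith
  have hsB_lb : (1 - ε) ^ 2 * p4 ≤ sB := by
    have h' : ∫ _ in B, ((1 - ε) ^ 2 : ℝ) ∂μ ≤ ∫ x in B, x ^ 2 ∂μ :=
      setIntegral_mono_on (integrableOn_const (measure_lt_top μ B).ne)
        hiB2 hB (fun x hx => by nlinarith [hx.1])
    rw [setIntegral_const, smul_eq_mul, measureReal_def] at h'
    rw [hsB]; linarith
  have hsR_nn : 0 ≤ sR := setIntegral_nonneg hR (fun x _ => sq_nonneg x)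
  have hsR_ub : sR ≤ 3 * ε := by nlinarith [hsA_lb, hsB_lb, hsplit2, hsum_ge, hp2nn, hp4nn]
  -- tail mean bound
  have hmR_abs : 2 * |mR| ≤ r + sR := by
    have hnorm : |mR| ≤ ∫ x in R, |x| ∂μ := by
      simpa [Real.norm_eq_abs] using
        norm_integral_le_integral_norm (f := fun x : ℝ => x) (μ := μ.restrict R)
    have hiRabs : IntegrableOn (fun x : ℝ => |x|) R μ := hiR1.abs
    have hiRc : IntegrableOn (fun _ : ℝ => (1 : ℝ)) R μ :=
      integrableOn_const (measure_lt_top μ R).ne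
    have hptw : ∫ x in R, (2 * |x|) ∂μ ≤ ∫ x in R, (1 + x ^ 2) ∂μ := by
      refine setIntegral_mono_on (hiRabs.const_mul 2) (hiRc.add hiR2) hR ?_
      intro x _
      nlinarith [sq_nonneg (|x| - 1), sq_abs x]
    have he1 : ∫ x in R, (2 * |x|) ∂μ = 2 * ∫ x in R, |x| ∂μ := by
      rw [integral_const_mul]
    have he2 : ∫ x in R, (1 + x ^ 2) ∂μ = r + sR := by
      rw [integral_add hiRc hiR2, setIntegral_const, smul_eq_mul, mul_one, measureReal_def]
    rw [he1, he2] at hptw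
    linarith [hnorm, hptw]
  have hmR_bound : |mR| ≤ 2 * ε := by
    rw [hrval] at hmR_abs
    linarith [hmR_abs, hsR_ub]
  rw [abs_le] at hmR_bound
  -- combine
  have hdiff_ub : p4 - p2 ≤ 3 * ε := by nlinarith [hmA_lb, hmB_lb, hsplit1, hmR_bound.1,
    hmR_bound.2, hsum_le, hp2nn, hp4nn]
  have hdiff_lb : p2 - p4 ≤ 3 * ε := by nlinarith [hmA_ub, hmB_ub, hsplit1, hmR_bound.1,
    hmR_bound.2, hsum_le, hp2nn, hp4nn]
  refine ⟨?_, ?_, ?_, ?_, ?_⟩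
  · rw [abs_lt]; constructor <;> linarith
  · linarith
  · linarith
  · linarith
  · linarith
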